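/- arXiv:2301.02932 — 2 statements merged into one kernel-verified Lean document; each statement's English description precedes it below -/
import Mathlib

section
/- Let Σ̂ⁿ ⊂ S^{n+1} be a closed connected orientable immersed minimal hypersurface invariant under the antipodal map τ = −Id, and let Σ = Σ̂/{x ∼ −x} ⊂ ℝP^{n+1} be its quotient. If Σ is two-sided in ℝP^{n+1}, then the unit normal N of Σ̂, viewed as a map to ℝ^{n+2}, satisfies N(−x) = −N(x), and Ind(Σ) = Ind_E(Σ̂); if Σ is one-sided, then N(−x) = N(x) and Ind(Σ) = Ind_O(Σ̂). -/
noncomputable section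

open scoped RealInnerProductSpace

/-- The ambient Euclidean space `ℝ^{n+2}`. -/
abbrev E (n : ℕ) : Type := EuclideanSpace ℝ (Fin (n + 2))

/-- A (set-modelled) two-sided minimal hypersurface `Σⁿ` of the unit sphere
`S^{n+1} ⊂ ℝ^{n+2}`, together with the standard objects of its extrinsic geometry:
the unit normal `N`, the orthogonal projection `P x` onto the tangent space, the
shape operator `A` (Weingarten map), and the mean curvature vector `H` of `Σ` viewed
as a submanifold of `ℝ^{n+2}` (for a hypersurface of `S^{n+1}` which is minimal in the
sphere, `H x = −n·x`). -/
structure MinimalSphereHypersurface (n : ℕ) where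
  carrier : Set (E n)
  subset_sphere : ∀ x ∈ carrier, ‖x‖ = 1
  /-- unit normal field of `Σ` in `S^{n+1}` -/
  N : E n → E n
  N_unit : ∀ x ∈ carrier, ‖N x‖ = 1
  N_perp : ∀ x ∈ carrier, ⟪N x, x⟫ = 0
  N_diff : ∀ x ∈ carrier, DifferentiableAt ℝ N x
  /-- orthogonal projection onto the tangent space `T_xΣ ⊂ ℝ^{n+2}` -/
  P : E n → E n →ₗ[ℝ] E n
  P_symm : ∀ x ∈ carrier, ∀ u v, ⟪P x u, v⟫ = ⟪u, P x v⟫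
  P_idem : ∀ x ∈ carrier, ∀ v, P x (P x v) = P x v
  P_pos : ∀ x ∈ carrier, P x x = 0
  P_normal : ∀ x ∈ carrier, P x (N x) = 0
  P_tangent : ∀ x ∈ carrier, ∀ v, ⟪v, x⟫ = 0 → ⟪v, N x⟫ = 0 → P x v = v
  /-- the shape operator -/
  A : E n → E n →ₗ[ℝ] E n
  /-- Weingarten formula: `A_x v = −(D_v N)^⊤` -/
  weingarten : ∀ x ∈ carrier, ∀ v, A x v = - P x (fderiv ℝ N x (P x v))
  /-- mean curvature vector of `Σ ⊂ ℝ^{n+2}` -/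
  H : E n → E n
  H_eq : ∀ x ∈ carrier, H x = (LinearMap.trace ℝ (E n) (A x)) • N x - (n : ℝ) • x
  /-- minimality of `Σ` in `S^{n+1}`: the mean curvature `tr A` vanishes -/
  minimal : ∀ x ∈ carrier, LinearMap.trace ℝ (E n) (A x) = 0

namespace MinimalSphereHypersurface

variable {n : ℕ} (Φ : MinimalSphereHypersurface n)

/-- The surface gradient `∇^Σ f = (∇̄f)^⊤`, the tangential projection of the ambient
gradient. -/
def sgrad (f : E n → ℝ) (x : E n) : E n := Φ.P x (gradient f x)

/-- The Laplace–Beltrami operator of the induced metric on `Σ`, expressed through an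
ambient extension by the standard formula `Δ_Σ f = tr(P ∘ Hess f ∘ P) + ⟨∇̄f, H⟩`. -/
def slap (f : E n → ℝ) (x : E n) : ℝ :=
  LinearMap.trace ℝ (E n)
    ((Φ.P x).comp (((fderiv ℝ (gradient f) x).toLinearMap).comp (Φ.P x)))
    + ⟪gradient f x, Φ.H x⟫

/-- The squared norm `|II|²` of the second fundamental form, i.e. `tr(A²)`. -/
def iisq (x : E n) : ℝ := LinearMap.trace ℝ (E n) ((Φ.A x).comp (Φ.A x))

/-- The scalar Jacobi operator `𝓛 = Δ + |II|² + n` of the minimal hypersurface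
`Σⁿ ⊂ S^{n+1}`. -/
def jacobi (f : E n → ℝ) (x : E n) : ℝ := Φ.slap f x + (Φ.iisq x + n) * f x

end MinimalSphereHypersurface

/-- The subspace of ambient functions that are even on `carrier` under the antipodal map. -/
def evenOn {n : ℕ} (carrier : Set (E n)) : Submodule ℝ (E n → ℝ) where
  carrier := {u | ∀ x ∈ carrier, u (-x) = u x}
  add_mem' := fun ha hb x hx => by simp [ha x hx, hb x hx]
  zero_mem' := fun _ _ => rfl
  smul_mem' := fun c u hu x hx => by simp [hu x hx]

/-- The subspace of ambient functions that are odd on `carrier` under the antipodal map. -/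
def oddOn {n : ℕ} (carrier : Set (E n)) : Submodule ℝ (E n → ℝ) where
  carrier := {u | ∀ x ∈ carrier, u (-x) = -u x}
  add_mem' := fun ha hb x hx => by simp [ha x hx, hb x hx]; ring
  zero_mem' := fun _ _ => by simp
  smul_mem' := fun c u hu x hx => by simp [hu x hx]

/-- Scalar functions `φ` on `Σ̂` such that `φ·N` is antipodally equivariant, i.e.
`φ(−x)·N(−x) = −(φ(x)·N(x))`.  Under the identification `ℝP^{n+1} = S^{n+1}/±`, these
are exactly the normal vector fields of the quotient hypersurface `Σ = Σ̂/{x ∼ −x}`. -/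
def quotientNormalFields {n : ℕ} (Φ : MinimalSphereHypersurface n) :
    Submodule ℝ (E n → ℝ) where
  carrier := {u | ∀ x ∈ Φ.carrier, u (-x) • Φ.N (-x) = -(u x • Φ.N x)}
  add_mem' := fun ha hb x hx => by
    simp only [Pi.add_apply, add_smul, ha x hx, hb x hx]; abel
  zero_mem' := fun _ _ => by simp
  smul_mem' := fun c u hu x hx => by
    simp only [Pi.smul_apply, smul_eq_mul, mul_smul, hu x hx, smul_neg]
  
/-- Morse index of a quadratic form `Q` over functions on `carrier` (identifying functions
whose restrictions to `carrier` agree), constrained to lie in the subspace `C`. -/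
def carrierMorseIndex {n : ℕ} (Q : (E n → ℝ) → ℝ) (carrier : Set (E n))
    (C : Submodule ℝ (E n → ℝ)) : ℕ∞ :=
  ⨆ S ∈ {S : Submodule ℝ (E n → ℝ) | S ≤ C ∧
      (∀ u ∈ S, u ≠ 0 → ∃ x ∈ carrier, u x ≠ 0) ∧
      (∀ u ∈ S, u ≠ 0 → Q u < 0)},
    (Module.finrank ℝ ↥S : ℕ∞)

/-- The quotient hypersurface `Σ = Σ̂/{x ∼ −x} ⊂ ℝP^{n+1}` is two-sided iff it carries a
global unit normal, i.e. iff there is a continuous choice `ν(x) = ±N(x)` with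
`ν(−x) = −ν(x)` (a normal vector at `[x] ∈ ℝP^{n+1}` being an equivalence class
`(x,v) ∼ (−x,−v)`). -/
def IsTwoSidedQuotient {n : ℕ} (Φ : MinimalSphereHypersurface n) : Prop :=
  ∃ ν : E n → E n, ContinuousOn ν Φ.carrier ∧
    (∀ x ∈ Φ.carrier, ν x = Φ.N x ∨ ν x = -Φ.N x) ∧
    (∀ x ∈ Φ.carrier, ν (-x) = -ν x)

/-- A continuous function taking only the values `±1` on a preconnected set is constant. -/
lemma sign_const {n : ℕ} {s : Set (E n)} (hconn : IsPreconnected s) {g : E n → ℝ}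
    (hg : ContinuousOn g s) (hpm : ∀ x ∈ s, g x = 1 ∨ g x = -1)
    {x y : E n} (hx : x ∈ s) (hy : y ∈ s) : g x = g y := by
  have key : ∀ a b : E n, a ∈ s → b ∈ s → g a = -1 → g b = 1 → False := by
    intro a b ha hb hga hgb
    have h0 : (0 : ℝ) ∈ Set.Icc (g a) (g b) := by
      rw [hga, hgb]; constructor <;> norm_num
    obtain ⟨z, hz, hgz⟩ := hconn.intermediate_value ha hb hg h0
    rcases hpm z hz with h | h <;> rw [hgz] at h <;> norm_num at h
  rcases hpm x hx with h1 | h1 <;> rcases hpm y hy with h2 | h2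
  · rw [h1, h2]
  · exact absurd (key y x hy hx h2 h1) (by simp)
  · exact absurd (key x y hx hy h1 h2) (by simp)
  · rw [h1, h2]

lemma N_pm {n : ℕ} (Φ : MinimalSphereHypersurface n)
    (hsym : ∀ x ∈ Φ.carrier, -x ∈ Φ.carrier)
    (hPsym : ∀ x ∈ Φ.carrier, Φ.P (-x) = Φ.P x)
    {x : E n} (hx : x ∈ Φ.carrier) : Φ.N (-x) = Φ.N x ∨ Φ.N (-x) = -Φ.N x := by
  have hx' : -x ∈ Φ.carrier := hsym x hx
  set v := Φ.N (-x) with hv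
  have hv1 : ‖v‖ = 1 := Φ.N_unit _ hx'
  have hvx : ⟪v, x⟫ = 0 := by
    have := Φ.N_perp _ hx'
    rw [inner_neg_right] at this
    linarith
  have hPv : Φ.P x v = 0 := by
    rw [← hPsym x hx]; exact Φ.P_normal _ hx'
  set c : ℝ := ⟪v, Φ.N x⟫ with hc
  have hkey : v = c • Φ.N x := by
    set w := v - c • Φ.N x with hw
    have hwx : ⟪w, x⟫ = 0 := by
      rw [hw, inner_sub_left, inner_smul_left, Φ.N_perp x hx, hvx]
      simp
    have hwN : ⟪w, Φ.N x⟫ = 0 := by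
      rw [hw, inner_sub_left, inner_smul_left, ← hc,
        real_inner_self_eq_norm_sq, Φ.N_unit x hx]
      simp
    have h1 : Φ.P x w = w := Φ.P_tangent x hx w hwx hwN
    have h2 : Φ.P x w = 0 := by
      rw [hw, map_sub, map_smul, hPv, Φ.P_normal x hx]
      simp
    have : w = 0 := h1.symm.trans h2
    rw [hw, sub_eq_zero] at this
    exact this
  have hcabs : |c| = 1 := by
    have := hv1
    rw [hkey, norm_smul, Φ.N_unit x hx, mul_one] at this
    simpa using this
  rcases abs_eq (by norm_num : (0:ℝ) ≤ 1) |>.mp hcabs with h | h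
  · left; rw [hkey, h, one_smul]
  · right; rw [hkey, h, neg_one_smul]

lemma smul_N_cancel {n : ℕ} (Φ : MinimalSphereHypersurface n) {x : E n}
    (hx : x ∈ Φ.carrier) {a b : ℝ} (h : a • Φ.N x = b • Φ.N x) : a = b := by
  have hN : Φ.N x ≠ 0 := by
    intro h0
    have := Φ.N_unit x hx
    rw [h0, norm_zero] at this; norm_num at this
  have : (a - b) • Φ.N x = 0 := by rw [sub_smul, h, sub_self]
  rcases smul_eq_zero.mp this with h' | h'
  · linarith [sub_eq_zero.mp (by linarith [h'] : a - b = 0)]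
  · exact absurd h' hN

lemma mem_quotientNormalFields {n : ℕ} (Φ : MinimalSphereHypersurface n) {u : E n → ℝ} :
    u ∈ quotientNormalFields Φ ↔
      ∀ x ∈ Φ.carrier, u (-x) • Φ.N (-x) = -(u x • Φ.N x) := Iff.rfl

lemma mem_evenOn {n : ℕ} {s : Set (E n)} {u : E n → ℝ} :
    u ∈ evenOn s ↔ ∀ x ∈ s, u (-x) = u x := Iff.rfl

lemma mem_oddOn {n : ℕ} {s : Set (E n)} {u : E n → ℝ} :
    u ∈ oddOn s ↔ ∀ x ∈ s, u (-x) = -u x := Iff.rfl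

lemma quot_eq_even {n : ℕ} (Φ : MinimalSphereHypersurface n)
    (hanti : ∀ x ∈ Φ.carrier, Φ.N (-x) = -Φ.N x) :
    quotientNormalFields Φ = evenOn Φ.carrier := by
  ext u
  rw [mem_quotientNormalFields, mem_evenOn]
  constructor
  · intro h x hx
    have := h x hx
    rw [hanti x hx, smul_neg, neg_inj.symm.mp rfl] at this
    exact smul_N_cancel Φ hx (neg_injective this)
  · intro h x hx
    rw [hanti x hx, smul_neg, h x hx]

lemma quot_eq_odd {n : ℕ} (Φ : MinimalSphereHypersurface n)
    (heven : ∀ x ∈ Φ.carrier, Φ.N (-x) = Φ.N x) :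
    quotientNormalFields Φ = oddOn Φ.carrier := by
  ext u
  rw [mem_quotientNormalFields, mem_oddOn]
  constructor
  · intro h x hx
    have := h x hx
    rw [heven x hx, ← neg_smul] at this
    exact smul_N_cancel Φ hx this
  · intro h x hx
    rw [heven x hx, h x hx, neg_smul]

/-- Let `Σ̂ⁿ ⊂ S^{n+1}` be a closed connected orientable immersed minimal
hypersurface invariant under the antipodal map `τ = −Id`, and let `Σ = Σ̂/{x ∼ −x}` be its
quotient in `ℝP^{n+1}`.  If `Σ` is two-sided, then the unit normal `N` of `Σ̂` satisfies
`N(−x) = −N(x)` and `Ind(Σ) = Ind_E(Σ̂)`; if `Σ` is one-sided, then `N(−x) = N(x)` and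
`Ind(Σ) = Ind_O(Σ̂)`.  Here `Ind(Σ)` is the Morse index of the index form over the normal
fields of the quotient, and `Ind_E, Ind_O` are the even and odd Morse indices of `Σ̂` with
respect to the antipodal involution. -/
theorem quotient_index_even_odd {n : ℕ} (Φ : MinimalSphereHypersurface n)
    (hne : Φ.carrier.Nonempty) (hconn : IsConnected Φ.carrier)
    (hcpt : IsCompact Φ.carrier)
    (hsym : ∀ x ∈ Φ.carrier, -x ∈ Φ.carrier)
    (hNcont : ContinuousOn Φ.N Φ.carrier)
    (hPsym : ∀ x ∈ Φ.carrier, Φ.P (-x) = Φ.P x) :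
    (IsTwoSidedQuotient Φ →
      (∀ x ∈ Φ.carrier, Φ.N (-x) = -Φ.N x) ∧
      ∀ Q : (E n → ℝ) → ℝ,
        carrierMorseIndex Q Φ.carrier (quotientNormalFields Φ) =
          carrierMorseIndex Q Φ.carrier (evenOn Φ.carrier)) ∧
    (¬ IsTwoSidedQuotient Φ →
      (∀ x ∈ Φ.carrier, Φ.N (-x) = Φ.N x) ∧
      ∀ Q : (E n → ℝ) → ℝ,
        carrierMorseIndex Q Φ.carrier (quotientNormalFields Φ) =
          carrierMorseIndex Q Φ.carrier (oddOn Φ.carrier)) := by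
  -- sign function g x = ⟪N(-x), N x⟫ is ±1 and continuous on the carrier
  set g : E n → ℝ := fun x => ⟪Φ.N (-x), Φ.N x⟫ with hg
  have hgcont : ContinuousOn g Φ.carrier := by
    apply ContinuousOn.inner
    · exact hNcont.comp continuous_neg.continuousOn (fun x hx => hsym x hx)
    · exact hNcont
  have hgpm : ∀ x ∈ Φ.carrier, g x = 1 ∨ g x = -1 := by
    intro x hx
    rcases N_pm Φ hsym hPsym hx with h | h
    · left
      simp only [hg, h, real_inner_self_eq_norm_sq, Φ.N_unit x hx]; norm_num
    · right
      simp only [hg, h, inner_neg_left, real_inner_self_eq_norm_sq, Φ.N_unit x hx]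
      norm_num
  -- g is constant by connectedness
  obtain ⟨x₀, hx₀⟩ := hne
  have hgconst : ∀ x ∈ Φ.carrier, g x = g x₀ :=
    fun x hx => sign_const hconn.isPreconnected hgcont hgpm hx hx₀
  -- dichotomy on g x₀
  have dichot : (∀ x ∈ Φ.carrier, Φ.N (-x) = -Φ.N x) ∨
      (∀ x ∈ Φ.carrier, Φ.N (-x) = Φ.N x) := by
    rcases hgpm x₀ hx₀ with h0 | h0
    · right
      intro x hx
      rcases N_pm Φ hsym hPsym hx with h | h
      · exact h
      · exfalso
        rcases hgpm x hx with h1 | h1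
        · rw [hg] at h1
          simp only at h1
          rw [h, inner_neg_left, real_inner_self_eq_norm_sq, Φ.N_unit x hx] at h1
          norm_num at h1
        · have := hgconst x hx
          rw [h1, h0] at this; norm_num at this
    · left
      intro x hx
      rcases N_pm Φ hsym hPsym hx with h | h
      · exfalso
        have h1 : g x = 1 := by
          rw [hg]; simp only
          rw [h, real_inner_self_eq_norm_sq, Φ.N_unit x hx]; norm_num
        have := hgconst x hx
        rw [h1, h0] at this; norm_num at this
      · exact h
  constructor
  · -- two-sided case
    intro ⟨ν, hνc, hνpm, hνanti⟩
    have hanti : ∀ x ∈ Φ.carrier, Φ.N (-x) = -Φ.N x := by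
      rcases dichot with h | h
      · exact h
      · -- derive a contradiction: N even and ν anti-equivariant is impossible
        exfalso
        set ε : E n → ℝ := fun x => ⟪ν x, Φ.N x⟫ with hε
        have hεcont : ContinuousOn ε Φ.carrier := ContinuousOn.inner hνc hNcont
        have hεpm : ∀ x ∈ Φ.carrier, ε x = 1 ∨ ε x = -1 := by
          intro x hx
          rcases hνpm x hx with h' | h'
          · left
            simp only [hε, h', real_inner_self_eq_norm_sq, Φ.N_unit x hx]; norm_num
          · right
            simp only [hε, h', inner_neg_left, real_inner_self_eq_norm_sq,
              Φ.N_unit x hx]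
            norm_num
        have hνeq : ∀ x ∈ Φ.carrier, ν x = ε x • Φ.N x := by
          intro x hx
          rcases hνpm x hx with h' | h'
          · rw [h']
            have : ε x = 1 := by
              simp only [hε, h', real_inner_self_eq_norm_sq, Φ.N_unit x hx]; norm_num
            rw [this, one_smul]
          · rw [h']
            have : ε x = -1 := by
              simp only [hε, h', inner_neg_left, real_inner_self_eq_norm_sq,
                Φ.N_unit x hx]
              norm_num
            rw [this, neg_one_smul]
        -- ε is constant, but ε(-x₀) = -ε(x₀)
        have hx₀' : -x₀ ∈ Φ.carrier := hsym x₀ hx₀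
        have hc : ε (-x₀) = ε x₀ :=
          sign_const hconn.isPreconnected hεcont hεpm hx₀' hx₀
        have h1 : ν (-x₀) = ε (-x₀) • Φ.N x₀ := by
          rw [hνeq _ hx₀', h x₀ hx₀]
        have h2 : ν (-x₀) = (-ε x₀) • Φ.N x₀ := by
          rw [hνanti x₀ hx₀, hνeq x₀ hx₀, neg_smul]
        have : ε (-x₀) = -ε x₀ := smul_N_cancel Φ hx₀ (h1.symm.trans h2)
        rw [hc] at this
        rcases hεpm x₀ hx₀ with h' | h' <;> rw [h'] at this <;> norm_num at this
    refine ⟨hanti, fun Q => ?_⟩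
    rw [quot_eq_even Φ hanti]
  · -- one-sided case
    intro hns
    have heven : ∀ x ∈ Φ.carrier, Φ.N (-x) = Φ.N x := by
      rcases dichot with h | h
      · exfalso
        exact hns ⟨Φ.N, hNcont, fun x _ => Or.inl rfl, h⟩
      · exact h
    refine ⟨heven, fun Q => ?_⟩
    rw [quot_eq_odd Φ heven]
end
end

section
/- Let m ≥ 4 be even. With respect to the antipodal involution τ = R_{Σ^0} ∘ R_{Σ^{π/2}} ∘ R_{Σ_0} ∘ R_{Σ_{π/2}}, assume: the Jacobi index contributions are Ind(V^{--}) = 0; Ind(V^{+-}) = Ind(V^{-+}) = 1 with first eigenfunctions odd under exactly one of the four reflections (hence τ-odd); and within V^{++}, the τ-odd part contributes Ind(V^{++}_{+-}) + Ind(V^{++}_{-+}) = m and the τ-even part contributes Ind(V^{++}_{++}) + Ind(V^{++}_{--}) = m − 1. Then Ind_O(ξ_{m−1,1}) = m + 2 and Ind_E(ξ_{m−1,1}) = m − 1; moreover since all six basis Jacobi fields are each odd under exactly two of the four commuting reflections, Nul_E(ξ_{m−1,1}) = 6 and Nul_O(ξ_{m−1,1}) = 0. -/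
noncomputable section

/-- The subspace of functions even with respect to the involution `τ`. -/
def evenSub {X : Type} (τ : X → X) : Submodule ℝ (X → ℝ) where
  carrier := {u | ∀ x, u (τ x) = u x}
  add_mem' := fun ha hb x => by simp [ha x, hb x]
  zero_mem' := fun _ => rfl
  smul_mem' := fun c u hu x => by simp [hu x]

/-- The subspace of functions odd with respect to the involution `τ`. -/
def oddSub {X : Type} (τ : X → X) : Submodule ℝ (X → ℝ) where
  carrier := {u | ∀ x, u (τ x) = -u x}
  add_mem' := fun ha hb x => by simp [ha x, hb x]; ring
  zero_mem' := fun _ => by simp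
  smul_mem' := fun c u hu x => by simp [hu x]

/-- Let `m ≥ 4` be even.  On the Lawson surface `ξ_{m−1,1} ⊂ S³` with its
four commuting reflection symmetries `r 0 = R_{Σ^0}`, `r 1 = R_{Σ^{π/2}}`, `r 2 = R_{Σ_0}`,
`r 3 = R_{Σ_{π/2}}`, whose composition is the antipodal involution `τ`, assume the index
contributions of the Jacobi operator on the invariant subspaces `V^{±±}` are:
`Ind(V^{−−}) = 0`; `Ind(V^{+−}) = Ind(V^{−+}) = 1` with the corresponding first
eigenfunctions `τ`-odd; and within `V^{++}` the `τ`-odd part contributes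
`Ind(V^{++}_{+−}) + Ind(V^{++}_{−+}) = m` and the `τ`-even part contributes
`Ind(V^{++}_{++}) + Ind(V^{++}_{−−}) = m − 1`.  Then `Ind_O(ξ_{m−1,1}) = m + 2` and
`Ind_E(ξ_{m−1,1}) = m − 1`.  Moreover, since the (6-dimensional) space `J` of Jacobi fields
is spanned by six fields each odd under exactly two of the four reflections (hence
`τ`-even), the even and odd nullities are `Nul_E = 6` and `Nul_O = 0`. -/
theorem lawson_even_odd_index_nullity
    (m : ℕ) (hm : 4 ≤ m) (hme : Even m)
    (X : Type) (r : Fin 4 → X → X)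
    (hinv : ∀ j, r j ∘ r j = id)
    (hcomm : ∀ i j, r i ∘ r j = r j ∘ r i)
    (τ : X → X) (hτ : τ = r 0 ∘ r 1 ∘ r 2 ∘ r 3)
    -- index bookkeeping with respect to the τ-parity decomposition of each V^{±±}
    (IndEpp IndOpp IndEpm IndOpm IndEmp IndOmp IndEmm IndOmm IndE IndO : ℕ)
    (hmm : IndEmm + IndOmm = 0)                      -- Ind(V^{--}) = 0
    (hpm : IndEpm + IndOpm = 1) (hpmodd : IndOpm = 1) -- Ind(V^{+-}) = 1, first eigenfn τ-odd
    (hmp : IndEmp + IndOmp = 1) (hmpodd : IndOmp = 1) -- Ind(V^{-+}) = 1, first eigenfn τ-odd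
    (hppO : IndOpp = m)                               -- Ind(V^{++}_{+-}) + Ind(V^{++}_{-+})
    (hppE : IndEpp = m - 1)                           -- Ind(V^{++}_{++}) + Ind(V^{++}_{--})
    (hE : IndE = IndEpp + IndEpm + IndEmp + IndEmm)
    (hO : IndO = IndOpp + IndOpm + IndOmp + IndOmm)
    -- the space of Jacobi fields and its basis of non-exceptional Jacobi fields
    (J : Submodule ℝ (X → ℝ)) (hJ : Module.finrank ℝ ↥J = 6)
    (b : Fin 6 → X → ℝ) (hspan : Submodule.span ℝ (Set.range b) = J)
    (hparity : ∀ i : Fin 6, ∃ s : Finset (Fin 4), s.card = 2 ∧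
      ∀ j : Fin 4, (b i) ∘ (r j) = (if j ∈ s then (-1 : ℝ) else 1) • b i) :
    IndO = m + 2 ∧ IndE = m - 1 ∧
    Module.finrank ℝ ↥(J ⊓ evenSub τ) = 6 ∧
    Module.finrank ℝ ↥(J ⊓ oddSub τ) = 0 := by
  have hEmm : IndEmm = 0 := by omega
  have hOmm : IndOmm = 0 := by omega
  have hEpm : IndEpm = 0 := by omega
  have hEmp : IndEmp = 0 := by omega
  refine ⟨by omega, by omega, ?_, ?_⟩
  · -- every basis element is τ-even, so J ⊓ evenSub τ = J
    have hbe : ∀ i, b i ∈ evenSub τ := by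
      intro i
      obtain ⟨s, hcard, hpar⟩ := hparity i
      intro x
      have hval : ∀ j : Fin 4, ∀ y, b i (r j y) =
          (if j ∈ s then (-1 : ℝ) else 1) * b i y := by
        intro j y
        have := congrFun (hpar j) y
        simpa using this
      have hprod : (∏ j : Fin 4, (if j ∈ s then (-1 : ℝ) else 1)) = 1 := by
        have : (∏ j : Fin 4, (if j ∈ s then (-1 : ℝ) else 1))
            = ∏ j ∈ s, (-1 : ℝ) := by
          rw [Finset.prod_ite_mem, Finset.univ_inter]
        rw [this, Finset.prod_const, hcard]
        norm_num
      rw [hτ]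
      simp only [Function.comp_apply]
      rw [hval 0, hval 1, hval 2, hval 3]
      have := hprod
      rw [Fin.prod_univ_four] at this
      calc (if (0:Fin 4) ∈ s then (-1:ℝ) else 1) * ((if (1:Fin 4) ∈ s then (-1:ℝ) else 1) *
            ((if (2:Fin 4) ∈ s then (-1:ℝ) else 1) * ((if (3:Fin 4) ∈ s then (-1:ℝ) else 1) * b i x)))
          = ((if (0:Fin 4) ∈ s then (-1:ℝ) else 1) * (if (1:Fin 4) ∈ s then (-1:ℝ) else 1) *
            (if (2:Fin 4) ∈ s then (-1:ℝ) else 1) * (if (3:Fin 4) ∈ s then (-1:ℝ) else 1)) * b i x := by ring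
        _ = b i x := by rw [this]; ring
    have hJle : J ≤ evenSub τ := by
      rw [← hspan]
      apply Submodule.span_le.2
      rintro _ ⟨i, rfl⟩
      exact hbe i
    rw [inf_eq_left.2 hJle, hJ]
  · -- J ⊓ oddSub τ = ⊥
    have hJle : J ≤ evenSub τ := by
      have hbe : ∀ i, b i ∈ evenSub τ := by
        intro i
        obtain ⟨s, hcard, hpar⟩ := hparity i
        intro x
        have hval : ∀ j : Fin 4, ∀ y, b i (r j y) =
            (if j ∈ s then (-1 : ℝ) else 1) * b i y := by
          intro j y
          have := congrFun (hpar j) y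
          simpa using this
        have hprod : (∏ j : Fin 4, (if j ∈ s then (-1 : ℝ) else 1)) = 1 := by
          have : (∏ j : Fin 4, (if j ∈ s then (-1 : ℝ) else 1))
              = ∏ j ∈ s, (-1 : ℝ) := by
            rw [Finset.prod_ite_mem, Finset.univ_inter]
          rw [this, Finset.prod_const, hcard]
          norm_num
        rw [hτ]
        simp only [Function.comp_apply]
        rw [hval 0, hval 1, hval 2, hval 3]
        have := hprod
        rw [Fin.prod_univ_four] at this
        calc (if (0:Fin 4) ∈ s then (-1:ℝ) else 1) * ((if (1:Fin 4) ∈ s then (-1:ℝ) else 1) *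
              ((if (2:Fin 4) ∈ s then (-1:ℝ) else 1) * ((if (3:Fin 4) ∈ s then (-1:ℝ) else 1) * b i x)))
            = ((if (0:Fin 4) ∈ s then (-1:ℝ) else 1) * (if (1:Fin 4) ∈ s then (-1:ℝ) else 1) *
              (if (2:Fin 4) ∈ s then (-1:ℝ) else 1) * (if (3:Fin 4) ∈ s then (-1:ℝ) else 1)) * b i x := by ring
          _ = b i x := by rw [this]; ring
      rw [← hspan]
      apply Submodule.span_le.2
      rintro _ ⟨i, rfl⟩
      exact hbe i
    have hbot : J ⊓ oddSub τ = ⊥ := by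
      apply le_antisymm _ bot_le
      rintro u ⟨huJ, huO⟩
      have huE := hJle huJ
      have : u = 0 := by
        funext x
        have h1 := huE x
        have h2 := huO x
        simp only [Pi.zero_apply]
        linarith
      simpa [this] using Submodule.zero_mem (⊥ : Submodule ℝ (X → ℝ))
    rw [hbot]
    simp
end
end
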